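/- Let D be the diagonal subgroup of SL(n,ℝ) and let x = (x₂,…,x_{n−1}) have all coordinates nonzero. Let w(x) be the unipotent matrix with 1's on the diagonal and entries x_j in position (2, j+1) for 2 ≤ j ≤ n−1. Then the subgroup generated by D and w(x)^{−1} D w(x) contains the full group W = {w(y) : y ∈ ℝ^{n−2}}. -/

import Mathlib

noncomputable section

open Matrix

/-- The strictly upper-triangular matrix with entries `x₁, …, x_{n-2}` in row `2`
(index `1`), columns `3, …, n` (indices `2, …, n-1`), and zeros elsewhere. -/
def Emat (k : ℕ) (x : Fin k → ℝ) : Matrix (Fin (k + 2)) (Fin (k + 2)) ℝ :=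
  ∑ j : Fin k, Matrix.single 1 j.succ.succ (x j)

/-- The unipotent matrix `w(x)` of equation (eq:8) of the paper: `1`s on the
diagonal, entries `x` in the second row (columns `3` through `n`), zeros elsewhere. -/
def wMat (k : ℕ) (x : Fin k → ℝ) : Matrix (Fin (k + 2)) (Fin (k + 2)) ℝ :=
  1 + Emat k x

lemma Emat_apply_eq_zero_of_lt (k : ℕ) (x : Fin k → ℝ) {i j : Fin (k + 2)}
    (hij : j < i) : Emat k x i j = 0 := by
  rw [Emat]
  simp only [Matrix.sum_apply]
  refine Finset.sum_eq_zero fun l _ => ?_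
  rw [Matrix.single]
  simp only [Matrix.of_apply]
  rcases eq_or_ne (1 : Fin (k+2)) i with hi | hi
  · have : l.succ.succ ≠ j := by
      intro h
      subst h
      rw [← hi] at hij
      have : (l.succ.succ : Fin (k+2)).val < 1 := hij
      simp [Fin.val_succ] at this
    simp [this]
  · simp [hi]

lemma wMat_det (k : ℕ) (x : Fin k → ℝ) : (wMat k x).det = 1 := by
  have h : (wMat k x).BlockTriangular id := by
    intro i j hij
    have hij' : j < i := hij
    have hne : i ≠ j := ne_of_gt hij'
    simp [wMat, Matrix.one_apply, hne, Emat_apply_eq_zero_of_lt k x hij']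
  rw [Matrix.det_of_upperTriangular h]
  have : ∀ i, wMat k x i i = 1 := by
    intro i
    have : Emat k x i i = 0 := by
      rw [Emat]
      simp only [Matrix.sum_apply]
      refine Finset.sum_eq_zero fun l _ => ?_
      rw [Matrix.single]
      simp only [Matrix.of_apply]
      rcases eq_or_ne (1 : Fin (k+2)) i with hi | hi
      · have : l.succ.succ ≠ i := by
          rw [← hi]
          intro h
          have := congrArg Fin.val h
          simp [Fin.val_succ] at this
        simp [this]
      · simp [hi]
    simp [wMat, Matrix.one_apply, this]
  simp [this]

/-- `w(x)` as an element of `SL(n, ℝ)`. -/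
def wSL (k : ℕ) (x : Fin k → ℝ) : Matrix.SpecialLinearGroup (Fin (k + 2)) ℝ :=
  ⟨wMat k x, wMat_det k x⟩

/-- The diagonal matrix `a_t = diag(e^{(n-1)t}, e^{-t}, …, e^{-t})`, `n = m + 1`. -/
def aMat (m : ℕ) (t : ℝ) : Matrix (Fin (m + 1)) (Fin (m + 1)) ℝ :=
  Matrix.diagonal (Fin.cons (Real.exp (m * t)) fun _ => Real.exp (-t))

lemma aMat_det (m : ℕ) (t : ℝ) : (aMat m t).det = 1 := by
  rw [aMat, Matrix.det_diagonal, Fin.prod_cons]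
  simp only [Finset.prod_const, Finset.card_univ, Fintype.card_fin]
  rw [← Real.exp_nat_mul, ← Real.exp_add]
  ring_nf
  exact Real.exp_zero

/-- `a_t` as an element of `SL(n, ℝ)`. -/
def aSL (m : ℕ) (t : ℝ) : Matrix.SpecialLinearGroup (Fin (m + 1)) ℝ :=
  ⟨aMat m t, aMat_det m t⟩

lemma succ_succ_ne_one' (k : ℕ) (j : Fin k) : (j.succ.succ : Fin (k + 2)) ≠ 1 := by
  intro h
  have := congrArg Fin.val h
  simp [Fin.val_succ, Fin.val_one] at this

lemma Emat_mul_Emat (k : ℕ) (a b : Fin k → ℝ) : Emat k a * Emat k b = 0 := by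
  rw [Emat, Emat, Finset.sum_mul_sum]
  refine Finset.sum_eq_zero fun i _ => Finset.sum_eq_zero fun j _ => ?_
  exact Matrix.single_mul_single_of_ne (a i) 1 i.succ.succ 1 (succ_succ_ne_one' k i) (b j)

lemma Emat_add (k : ℕ) (a b : Fin k → ℝ) : Emat k (a + b) = Emat k a + Emat k b := by
  rw [Emat, Emat, Emat, ← Finset.sum_add_distrib]
  exact Finset.sum_congr rfl fun j _ => Matrix.single_add _ _ _ _

lemma wMat_mul (k : ℕ) (a b : Fin k → ℝ) :
    wMat k a * wMat k b = wMat k (a + b) := by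
  simp only [wMat, add_mul, mul_add, one_mul, mul_one, Emat_mul_Emat, Emat_add]
  abel

lemma wSL_mul (k : ℕ) (a b : Fin k → ℝ) :
    wSL k a * wSL k b = wSL k (a + b) := by
  apply Subtype.ext
  show wMat k a * wMat k b = wMat k (a + b)
  exact wMat_mul k a b

lemma Emat_mul_diagonal (k : ℕ) (a : Fin k → ℝ) (d : Fin (k + 2) → ℝ) :
    Emat k a * Matrix.diagonal d = Emat k (fun j => a j * d j.succ.succ) := by
  ext i j
  rw [Matrix.mul_diagonal, Emat, Emat, Matrix.sum_apply, Matrix.sum_apply,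
    Finset.sum_mul]
  refine Finset.sum_congr rfl fun l _ => ?_
  rw [Matrix.single, Matrix.single]
  simp only [Matrix.of_apply]
  split_ifs with h
  · obtain ⟨h1, h2⟩ := h
    subst h2; rfl
  · ring

lemma diagonal_mul_Emat (k : ℕ) (a : Fin k → ℝ) (d : Fin (k + 2) → ℝ) :
    Matrix.diagonal d * Emat k a = Emat k (fun j => d 1 * a j) := by
  ext i j
  rw [Matrix.diagonal_mul, Emat, Emat, Matrix.sum_apply, Matrix.sum_apply,
    Finset.mul_sum]
  refine Finset.sum_congr rfl fun l _ => ?_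
  rw [Matrix.single, Matrix.single]
  simp only [Matrix.of_apply]
  split_ifs with h
  · obtain ⟨h1, h2⟩ := h
    subst h1; rfl
  · ring

/-- The diagonal vector `diag((∏ r)⁻¹, 1, r₁, …, r_k)`. -/
def dVec (k : ℕ) (r : Fin k → ℝ) : Fin (k + 2) → ℝ :=
  Fin.cons (∏ j, r j)⁻¹ (Fin.cons 1 r)

lemma dVec_one (k : ℕ) (r : Fin k → ℝ) : dVec k r 1 = 1 := by
  rw [dVec, show (1 : Fin (k + 2)) = Fin.succ 0 from rfl, Fin.cons_succ, Fin.cons_zero]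

lemma dVec_succ_succ (k : ℕ) (r : Fin k → ℝ) (j : Fin k) :
    dVec k r j.succ.succ = r j := by
  rw [dVec, Fin.cons_succ, Fin.cons_succ]

lemma dVec_det (k : ℕ) (r : Fin k → ℝ) (hr : ∀ j, r j ≠ 0) :
    (Matrix.diagonal (dVec k r)).det = 1 := by
  rw [Matrix.det_diagonal, dVec, Fin.prod_cons, Fin.prod_cons, one_mul,
    inv_mul_cancel₀ (Finset.prod_ne_zero_iff.2 fun j _ => hr j)]

/-- The diagonal matrix as an element of `SL`. -/
def dSL (k : ℕ) (r : Fin k → ℝ) (hr : ∀ j, r j ≠ 0) :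
    Matrix.SpecialLinearGroup (Fin (k + 2)) ℝ :=
  ⟨Matrix.diagonal (dVec k r), dVec_det k r hr⟩

lemma key_eq (k : ℕ) (x : Fin k → ℝ) (r : Fin k → ℝ) (hr : ∀ j, r j ≠ 0) :
    wSL k x * wSL k (fun j => x j * ((r j)⁻¹ - 1)) * dSL k r hr
      = dSL k r hr * wSL k x := by
  apply Subtype.ext
  show (wMat k x * wMat k (fun j => x j * ((r j)⁻¹ - 1))) * Matrix.diagonal (dVec k r)
      = Matrix.diagonal (dVec k r) * wMat k x
  rw [wMat_mul]
  have hxy : (x + fun j => x j * ((r j)⁻¹ - 1)) = fun j => x j * (r j)⁻¹ := by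
    funext j; simp [Pi.add_apply]; ring
  rw [hxy]
  rw [show wMat k (fun j => x j * (r j)⁻¹) = 1 + Emat k (fun j => x j * (r j)⁻¹) from rfl,
    show wMat k x = 1 + Emat k x from rfl]
  rw [add_mul, mul_add, one_mul, mul_one, Emat_mul_diagonal, diagonal_mul_Emat]
  have h2 : (fun j => x j * (r j)⁻¹ * dVec k r j.succ.succ) = fun j => dVec k r 1 * x j := by
    funext j
    rw [dVec_succ_succ, dVec_one, mul_assoc, inv_mul_cancel₀ (hr j), mul_one, one_mul]
  rw [h2]

theorem wSL_mem_of_ne (k : ℕ) (x : Fin k → ℝ)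
    (S : Set (Matrix.SpecialLinearGroup (Fin (k + 2)) ℝ))
    (hS : S = {g : Matrix.SpecialLinearGroup (Fin (k + 2)) ℝ |
            ∃ d : Fin (k + 2) → ℝ, (g : Matrix (Fin (k + 2)) (Fin (k + 2)) ℝ)
              = Matrix.diagonal d} ∪
          (fun g => (wSL k x)⁻¹ * g * wSL k x) ''
            {g : Matrix.SpecialLinearGroup (Fin (k + 2)) ℝ |
              ∃ d : Fin (k + 2) → ℝ, (g : Matrix (Fin (k + 2)) (Fin (k + 2)) ℝ)
                = Matrix.diagonal d})
    (y : Fin k → ℝ) (hy : ∀ j, y j ≠ -x j) (hx : ∀ j, x j ≠ 0) :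
    wSL k y ∈ Subgroup.closure S := by
  -- choose r with x j * (r j⁻¹ - 1) = y j, i.e. r j = (y j / x j + 1)⁻¹
  set r : Fin k → ℝ := fun j => (y j / x j + 1)⁻¹ with hrdef
  have hr : ∀ j, r j ≠ 0 := by
    intro j
    have h1 : y j / x j + 1 ≠ 0 := by
      intro h
      apply hy j
      have h2 : y j / x j = -1 := by linarith
      rw [div_eq_iff (hx j)] at h2
      linarith
    simpa [hrdef] using inv_ne_zero h1
  have hyr : (fun j => x j * ((r j)⁻¹ - 1)) = y := by
    funext j
    rw [hrdef]
    simp only [inv_inv]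
    field_simp
    rw [add_sub_cancel_right, ← mul_div_assoc, mul_div_cancel_left₀ _ (hx j)]
  have hkey := key_eq k x r hr
  rw [hyr] at hkey
  have heq : wSL k y = ((wSL k x)⁻¹ * dSL k r hr * wSL k x) * (dSL k r hr)⁻¹ := by
    have := congrArg (fun g => (wSL k x)⁻¹ * g * (dSL k r hr)⁻¹) hkey
    simpa [mul_assoc] using this
  rw [heq]
  have hd_mem : dSL k r hr ∈ Subgroup.closure S := by
    apply Subgroup.subset_closure
    rw [hS]
    exact Or.inl ⟨dVec k r, rfl⟩
  have hconj_mem : (wSL k x)⁻¹ * dSL k r hr * wSL k x ∈ Subgroup.closure S := by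
    apply Subgroup.subset_closure
    rw [hS]
    exact Or.inr ⟨dSL k r hr, ⟨dVec k r, rfl⟩, rfl⟩
  exact mul_mem hconj_mem (inv_mem hd_mem)

/-- Step in the proof of Corollary (cor:curve): if `x = (x₂, …, x_{n-1})` has all
coordinates nonzero, then the subgroup of `SL(n, ℝ)` generated by the diagonal
subgroup `D` and by `w(x)⁻¹ D w(x)` contains the full group `W = {w(y)}`. -/
theorem W_subset_closure_D_conjD (k : ℕ) (hk : 1 ≤ k)
    (x : Fin k → ℝ) (hx : ∀ j, x j ≠ 0) :
    {g : Matrix.SpecialLinearGroup (Fin (k + 2)) ℝ |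
        ∃ y : Fin k → ℝ, (g : Matrix (Fin (k + 2)) (Fin (k + 2)) ℝ) = wMat k y} ⊆
      Subgroup.closure
        ({g : Matrix.SpecialLinearGroup (Fin (k + 2)) ℝ |
            ∃ d : Fin (k + 2) → ℝ, (g : Matrix (Fin (k + 2)) (Fin (k + 2)) ℝ)
              = Matrix.diagonal d} ∪
          (fun g => (wSL k x)⁻¹ * g * wSL k x) ''
            {g : Matrix.SpecialLinearGroup (Fin (k + 2)) ℝ |
              ∃ d : Fin (k + 2) → ℝ, (g : Matrix (Fin (k + 2)) (Fin (k + 2)) ℝ)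
                = Matrix.diagonal d}) := by
  intro g hg
  obtain ⟨y, hy⟩ := hg
  have hg' : g = wSL k y := Subtype.ext hy
  subst hg'
  -- choose z avoiding the two forbidden values in each coordinate
  set z : Fin k → ℝ := fun j => |x j| + |y j + x j| + 1 with hzdef
  have hz1 : ∀ j, z j ≠ -x j := by
    intro j
    have : -x j ≤ |x j| := neg_le_abs _
    have : z j > -x j := by
      rw [hzdef]
      have := abs_nonneg (y j + x j)
      simp only
      linarith [neg_le_abs (x j)]
    exact ne_of_gt this
  have hz2 : ∀ j, (y - z) j ≠ -x j := by
    intro j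
    have h1 : y j + x j ≤ |y j + x j| := le_abs_self _
    have : z j > y j + x j := by
      rw [hzdef]
      simp only
      linarith [abs_nonneg (x j)]
    intro h
    simp only [Pi.sub_apply] at h
    have : z j = y j + x j := by linarith
    linarith
  have h1 := wSL_mem_of_ne k x _ rfl z hz1 hx
  have h2 := wSL_mem_of_ne k x _ rfl (y - z) hz2 hx
  have : wSL k (y - z) * wSL k z = wSL k y := by
    rw [wSL_mul]; congr 1; abel
  rw [← this]
  exact mul_mem h2 h1
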